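/- For an undirected graph G and integer τ ≥ 1, the polytope P₁^τ(G) = { x ∈ ℝ^{E⁺∪E⁻} : x_{e⁺} ≥ 1, x_{e⁻} ≥ 1, x_{e⁺}+x_{e⁻} = τ for all e ∈ E, and x(δ⁺(U)) ≥ τ for all nonempty proper U ⊆ V } is an integral polytope (all its vertices are integral). -/

import Mathlib

set_option linter.unusedSectionVars false
set_option maxHeartbeats 1000000


open Finset

variable {V E : Type*} [Fintype V] [DecidableEq V] [Fintype E] [DecidableEq E]

/-- The arcs leaving the vertex set `U` (generic in the arc type). -/
def outArcs {A : Type*} [Fintype A] (src tgt : A → V) (U : Finset V) : Finset A :=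
  univ.filter fun a => src a ∈ U ∧ tgt a ∉ U

/-- Source of an arc of the bidirected graph `E × Bool`: `(e, true) = e⁺` goes from `s e` to
`t e`, and `(e, false) = e⁻` goes from `t e` to `s e`. -/
def bsrc (s t : E → V) (p : E × Bool) : V := if p.2 then s p.1 else t p.1

/-- Target of an arc of the bidirected graph `E × Bool`. -/
def btgt (s t : E → V) (p : E × Bool) : V := if p.2 then t p.1 else s p.1

/-- A strongly connected orientation of the graph with edges `E` and endpoints `s`, `t`:
a choice `O` of one direction per edge such that every nonempty proper cut has a leaving arc. -/
def IsSCO (s t : E → V) (O : E → Bool) : Prop :=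
  ∀ U : Finset V, U.Nonempty → U ≠ univ →
    ∃ e : E, (e, O e) ∈ outArcs (bsrc s t) (btgt s t) U

/-- Signed crossing coefficient of edge `e` w.r.t. cut `U`. -/
noncomputable def cc (s t : E → V) (U : Finset V) (e : E) : ℝ :=
  (if s e ∈ U then (1:ℝ) else 0) - (if t e ∈ U then (1:ℝ) else 0)

lemma cc_compl (s t : E → V) (U : Finset V) (e : E) :
    cc s t (univ \ U) e = - cc s t U e := by
  simp only [cc, Finset.mem_sdiff, Finset.mem_univ, true_and]
  by_cases h1 : s e ∈ U <;> by_cases h2 : t e ∈ U <;> simp [h1, h2]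

lemma cc_inter_union (s t : E → V) (U W : Finset V) (e : E) :
    cc s t (U ∩ W) e + cc s t (U ∪ W) e = cc s t U e + cc s t W e := by
  simp only [cc, Finset.mem_inter, Finset.mem_union]
  by_cases h1 : s e ∈ U <;> by_cases h2 : t e ∈ U <;> by_cases h3 : s e ∈ W <;>
    by_cases h4 : t e ∈ W <;> simp [h1, h2, h3, h4] <;> ring

lemma sum_outArcs (s t : E → V) (U : Finset V) (y : E × Bool → ℝ) :
    ∑ p ∈ outArcs (bsrc s t) (btgt s t) U, y p
      = ∑ e : E, ((if s e ∈ U ∧ t e ∉ U then y (e, true) else 0)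
          + (if t e ∈ U ∧ s e ∉ U then y (e, false) else 0)) := by
  rw [outArcs, Finset.sum_filter, Fintype.sum_prod_type]
  refine Finset.sum_congr rfl fun e _ => ?_
  rw [Fintype.sum_bool]
  simp [bsrc, btgt]

lemma sum_outArcs_antisym (s t : E → V) (U : Finset V) (d : E → ℝ) :
    ∑ p ∈ outArcs (bsrc s t) (btgt s t) U, (if p.2 then d p.1 else - d p.1)
      = ∑ e : E, cc s t U e * d e := by
  rw [sum_outArcs]
  refine Finset.sum_congr rfl fun e _ => ?_
  simp only [cc]
  by_cases h1 : s e ∈ U <;> by_cases h2 : t e ∈ U <;> simp [h1, h2] <;> ring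

lemma int_sum {ι : Type*} [DecidableEq ι] (s : Finset ι) (f : ι → ℝ)
    (h : ∀ i ∈ s, ∃ z : ℤ, f i = (z:ℝ)) : ∃ z : ℤ, ∑ i ∈ s, f i = (z:ℝ) := by
  induction s using Finset.induction_on with
  | empty => exact ⟨0, by simp⟩
  | @insert a s' ha ih =>
    obtain ⟨z1, hz1⟩ := h a (mem_insert_self a s')
    obtain ⟨z2, hz2⟩ := ih (fun i hi => h i (mem_insert_of_mem hi))
    exact ⟨z1 + z2, by rw [Finset.sum_insert ha, hz1, hz2]; push_cast; ring⟩

lemma exists_pos_eps {ι : Type*} [DecidableEq ι] (s : Finset ι) (α β : ι → ℝ)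
    (hα : ∀ i ∈ s, 0 < α i) : ∃ ε : ℝ, 0 < ε ∧ ε ≤ 1 ∧ ∀ i ∈ s, ε * |β i| ≤ α i := by
  induction s using Finset.induction_on with
  | empty => exact ⟨1, one_pos, le_refl 1, by simp⟩
  | @insert a s' ha ih =>
    obtain ⟨ε, hε, hε1, hεs⟩ := ih (fun i hi => hα i (mem_insert_of_mem hi))
    have hαa := hα a (mem_insert_self a s')
    have hden : (0:ℝ) < |β a| + 1 := by positivity
    refine ⟨min ε (α a / (|β a| + 1)), lt_min hε (by positivity), le_trans (min_le_left _ _) hε1,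
      fun i hi => ?_⟩
    rcases Finset.mem_insert.mp hi with rfl | hi
    · calc min ε (α i / (|β i| + 1)) * |β i| ≤ (α i / (|β i| + 1)) * |β i| := by
            apply mul_le_mul_of_nonneg_right (min_le_right _ _) (abs_nonneg _)
        _ ≤ α i := by
            rw [div_mul_eq_mul_div, div_le_iff₀ hden]
            nlinarith [abs_nonneg (β i), hα i (mem_insert_self i s')]
    · calc min ε (α a / (|β a| + 1)) * |β i| ≤ ε * |β i| := by
            apply mul_le_mul_of_nonneg_right (min_le_left _ _) (abs_nonneg _)
        _ ≤ α i := hεs i hi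

def crossFree (U W : Finset V) : Prop :=
  U ⊆ W ∨ W ⊆ U ∨ U ∩ W = ∅ ∨ U ∪ W = univ

lemma crossFree_comm {U W : Finset V} (h : crossFree U W) : crossFree W U := by
  rcases h with h | h | h | h
  · exact Or.inr (Or.inl h)
  · exact Or.inl h
  · exact Or.inr (Or.inr (Or.inl (by rwa [Finset.inter_comm])))
  · exact Or.inr (Or.inr (Or.inr (by rwa [Finset.union_comm])))

lemma crossFree_refl (U : Finset V) : crossFree U U := Or.inl (subset_refl U)

lemma crossFree_compl_right {U W : Finset V} :
    crossFree U (univ \ W) ↔ crossFree U W := by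
  constructor <;> intro h <;> rcases h with h | h | h | h
  · refine Or.inr (Or.inr (Or.inl ?_))
    ext v; simp only [Finset.mem_inter, Finset.notMem_empty, iff_false]
    rintro ⟨hv, hw⟩; have := h hv; simp at this; exact this hw
  · refine Or.inr (Or.inr (Or.inr ?_))
    ext v; simp only [Finset.mem_union, Finset.mem_univ, iff_true]
    by_cases hw : v ∈ W
    · exact Or.inr hw
    · exact Or.inl (h (by simp [hw]))
  · refine Or.inl fun v hv => ?_
    by_contra hw
    have : v ∈ U ∩ (univ \ W) := by simp [hv, hw]
    simp [h] at this
  · refine Or.inr (Or.inl fun v hv => ?_)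
    have : v ∈ U ∪ (univ \ W) := by rw [h]; simp
    simp at this
    rcases this with h1 | h1
    · exact h1
    · exact absurd hv h1
  · refine Or.inr (Or.inr (Or.inl ?_))
    ext v; simp only [Finset.mem_inter, Finset.notMem_empty, iff_false]
    rintro ⟨hv, hw⟩; simp at hw; exact hw (h hv)
  · refine Or.inr (Or.inr (Or.inr ?_))
    ext v; simp only [Finset.mem_union, Finset.mem_univ, iff_true]
    by_cases hw : v ∈ W
    · exact Or.inl (h hw)
    · exact Or.inr (by simp [hw])
  · refine Or.inl fun v hv => ?_
    simp only [Finset.mem_sdiff, Finset.mem_univ, true_and]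
    intro hw
    have : v ∈ U ∩ W := by simp [hv, hw]
    simp [h] at this
  · refine Or.inr (Or.inl fun v hv => ?_)
    simp only [Finset.mem_sdiff, Finset.mem_univ, true_and] at hv
    have : v ∈ U ∪ W := by rw [h]; simp
    simp at this
    rcases this with h1 | h1
    · exact h1
    · exact absurd h1 hv

lemma crossFree_compl_left {U W : Finset V} :
    crossFree (univ \ U) W ↔ crossFree U W :=
  ⟨fun h => crossFree_comm (crossFree_compl_right.mp (crossFree_comm h)),
   fun h => crossFree_comm (crossFree_compl_right.mpr (crossFree_comm h))⟩

lemma compl_inter_compl (U W : Finset V) :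
    univ \ ((univ \ U) ∩ (univ \ W)) = U ∪ W := by
  ext v; simp [em]
  tauto

/-- The key uncrossing lemma: if `X` is cross-free with `W`, `U` and `W` cross, and `X` is
cross-free with `U`, then `X` is cross-free with `U ∩ W`. -/
lemma crossFree_inter {X U W : Finset V} (hXW : crossFree X W) (hUW : ¬ crossFree U W)
    (hXU : crossFree X U) : crossFree X (U ∩ W) := by
  rcases hXW with h1 | h1 | h1 | h1
  · rcases hXU with h2 | h2 | h2 | h2
    · exact Or.inl (Finset.subset_inter h2 h1)
    · exact Or.inr (Or.inl (le_trans (Finset.inter_subset_left) h2))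
    · refine Or.inr (Or.inr (Or.inl ?_))
      ext v; simp only [Finset.mem_inter, Finset.notMem_empty, iff_false]
      rintro ⟨hv, hu, hw⟩
      have : v ∈ X ∩ U := by simp [hv, hu]
      simp [h2] at this
    · exfalso
      exact hUW (Or.inr (Or.inr (Or.inr (by
        apply Finset.eq_univ_of_forall; intro v
        have : v ∈ X ∪ U := by rw [h2]; simp
        simp at this ⊢
        rcases this with h3 | h3
        · exact Or.inr (h1 h3)
        · exact Or.inl h3))))
  · exact Or.inr (Or.inl (le_trans (Finset.inter_subset_right) h1))
  · refine Or.inr (Or.inr (Or.inl ?_))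
    ext v; simp only [Finset.mem_inter, Finset.notMem_empty, iff_false]
    rintro ⟨hv, _, hw⟩
    have : v ∈ X ∩ W := by simp [hv, hw]
    simp [h1] at this
  · rcases hXU with h2 | h2 | h2 | h2
    · exfalso
      exact hUW (Or.inr (Or.inr (Or.inr (by
        apply Finset.eq_univ_of_forall; intro v
        have : v ∈ X ∪ W := by rw [h1]; simp
        simp at this ⊢
        rcases this with h3 | h3
        · exact Or.inl (h2 h3)
        · exact Or.inr h3))))
    · exact Or.inr (Or.inl (le_trans (Finset.inter_subset_left) h2))
    · exfalso
      refine hUW (Or.inl fun v hv => ?_)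
      have hvX : v ∉ X := by
        intro hX
        have : v ∈ X ∩ U := by simp [hX, hv]
        simp [h2] at this
      have : v ∈ X ∪ W := by rw [h1]; simp
      simp at this
      rcases this with h3 | h3
      · exact absurd h3 hvX
      · exact h3
    · refine Or.inr (Or.inr (Or.inr ?_))
      apply Finset.eq_univ_of_forall; intro v
      simp only [Finset.mem_union, Finset.mem_inter]
      by_cases hX : v ∈ X
      · exact Or.inl hX
      · refine Or.inr ⟨?_, ?_⟩
        · have : v ∈ X ∪ U := by rw [h2]; simp
          simp at this; tauto
        · have : v ∈ X ∪ W := by rw [h1]; simp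
          simp at this; tauto

lemma crossFree_union {X U W : Finset V} (hXW : crossFree X W) (hUW : ¬ crossFree U W)
    (hXU : crossFree X U) : crossFree X (U ∪ W) := by
  rw [← compl_inter_compl U W, crossFree_compl_right]
  refine crossFree_inter (crossFree_compl_right.mpr hXW) ?_ (crossFree_compl_right.mpr hXU)
  intro h
  apply hUW
  have h' := crossFree_compl_right.mp (crossFree_comm (crossFree_compl_right.mp (crossFree_comm h)))
  simpa using h'

/-- Given a crossing-closed family `𝒯` on which `D` is defined with modular identity, and a
maximum-cardinality cross-free subfamily `L` on which `D` vanishes, `D` vanishes on all of `𝒯`. -/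
lemma D_vanishes (𝒯 L : Finset (Finset V))
    (hD : Finset V → ℝ)
    (hmod : ∀ U W : Finset V, hD (U ∩ W) + hD (U ∪ W) = hD U + hD W)
    (hclose : ∀ U ∈ 𝒯, ∀ W ∈ 𝒯, ¬ crossFree U W → (U ∩ W ∈ 𝒯 ∧ U ∪ W ∈ 𝒯))
    (hLsub : L ⊆ 𝒯)
    (hLcf : ∀ U ∈ L, ∀ W ∈ L, crossFree U W)
    (hLmax : ∀ L' : Finset (Finset V), L' ⊆ 𝒯 → (∀ U ∈ L', ∀ W ∈ L', crossFree U W) →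
      L'.card ≤ L.card)
    (hL0 : ∀ W ∈ L, hD W = 0) :
    ∀ U ∈ 𝒯, hD U = 0 := by
  classical
  suffices h : ∀ n : ℕ, ∀ U ∈ 𝒯, (L.filter fun W => ¬ crossFree U W).card ≤ n → hD U = 0 by
    exact fun U hU => h _ U hU le_rfl
  intro n
  induction n with
  | zero =>
    intro U hU hcard
    have hall : ∀ W ∈ L, crossFree U W := by
      intro W hW
      by_contra hc
      have : W ∈ L.filter fun W => ¬ crossFree U W := by simp [hW, hc]
      rw [Finset.card_eq_zero.mp (Nat.le_zero.mp hcard)] at this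
      simp at this
    have hUL : U ∈ L := by
      by_contra hUL
      have hcf : ∀ X ∈ insert U L, ∀ Y ∈ insert U L, crossFree X Y := by
        intro X hX Y hY
        rcases Finset.mem_insert.mp hX with hX' | hX'
        · subst hX'
          rcases Finset.mem_insert.mp hY with hY' | hY'
          · subst hY'; exact crossFree_refl _
          · exact hall Y hY'
        · rcases Finset.mem_insert.mp hY with hY' | hY'
          · subst hY'; exact crossFree_comm (hall X hX')
          · exact hLcf X hX' Y hY'
      have := hLmax (insert U L) (Finset.insert_subset hU hLsub) hcf
      rw [Finset.card_insert_of_notMem hUL] at this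
      omega
    exact hL0 U hUL
  | succ n ihn =>
    intro U hU hcard
    by_cases h0 : (L.filter fun W => ¬ crossFree U W) = ∅
    · -- no crossings: same as base case
      have hall : ∀ W ∈ L, crossFree U W := by
        intro W hW
        by_contra hc
        have : W ∈ L.filter fun W => ¬ crossFree U W := by simp [hW, hc]
        rw [h0] at this; simp at this
      have hUL : U ∈ L := by
        by_contra hUL
        have hcf : ∀ X ∈ insert U L, ∀ Y ∈ insert U L, crossFree X Y := by
          intro X hX Y hY
          rcases Finset.mem_insert.mp hX with hX' | hX'
          · subst hX'
            rcases Finset.mem_insert.mp hY with hY' | hY'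
            · subst hY'; exact crossFree_refl _
            · exact hall Y hY'
          · rcases Finset.mem_insert.mp hY with hY' | hY'
            · subst hY'; exact crossFree_comm (hall X hX')
            · exact hLcf X hX' Y hY'
        have := hLmax (insert U L) (Finset.insert_subset hU hLsub) hcf
        rw [Finset.card_insert_of_notMem hUL] at this
        omega
      exact hL0 U hUL
    · obtain ⟨W, hWf⟩ := Finset.nonempty_iff_ne_empty.mpr h0
      have hWL : W ∈ L := (Finset.mem_filter.mp hWf).1
      have hUW : ¬ crossFree U W := (Finset.mem_filter.mp hWf).2
      obtain ⟨hint, huni⟩ := hclose U hU W (hLsub hWL) hUW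
      -- crossing counts decrease
      have hsub : ∀ Z : Finset V, (∀ X : Finset V, crossFree X W → ¬ crossFree U W →
            crossFree X U → crossFree X Z) → crossFree Z W →
          (L.filter fun X => ¬ crossFree Z X).card ≤ n := by
        intro Z hkey hZW
        have hss : (L.filter fun X => ¬ crossFree Z X) ⊆
            (L.filter fun X => ¬ crossFree U X).erase W := by
          intro X hX
          obtain ⟨hXL, hXZ⟩ := Finset.mem_filter.mp hX
          refine Finset.mem_erase.mpr ⟨?_, ?_⟩
          · rintro rfl
            exact hXZ hZW
          · refine Finset.mem_filter.mpr ⟨hXL, fun hXU => ?_⟩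
            exact hXZ (crossFree_comm (hkey X (hLcf X hXL W hWL) hUW (crossFree_comm hXU)))
        have h1 : ((L.filter fun X => ¬ crossFree U X).erase W).card
            = (L.filter fun X => ¬ crossFree U X).card - 1 := by
          apply Finset.card_erase_of_mem
          simp only [Finset.mem_filter]
          exact ⟨hWL, hUW⟩
        have h2 : (L.filter fun X => ¬ crossFree U X).card ≤ n + 1 := by
          have : (L.filter fun X => ¬ crossFree U X) = (L.filter fun W => ¬ crossFree U W) := rfl
          rw [this]; exact hcard
        calc (L.filter fun X => ¬ crossFree Z X).card
            ≤ ((L.filter fun X => ¬ crossFree U X).erase W).card := Finset.card_le_card hss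
          _ ≤ n := by omega
      have hDint : hD (U ∩ W) = 0 := by
        refine ihn (U ∩ W) hint (hsub (U ∩ W) (fun X h1 h2 h3 => crossFree_inter h1 h2 h3) ?_)
        exact crossFree_comm (Or.inr (Or.inl Finset.inter_subset_right))
      have hDuni : hD (U ∪ W) = 0 := by
        refine ihn (U ∪ W) huni (hsub (U ∪ W) (fun X h1 h2 h3 => crossFree_union h1 h2 h3) ?_)
        exact crossFree_comm (Or.inl Finset.subset_union_right)
      have := hmod U W
      have hDW := hL0 W hWL
      linarith

/-- Key lemma for a laminar family: given that all values `g e` are non-integral on `F` and the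
cut sums are integral, there is a nonzero perturbation direction `d` supported on `F` orthogonal
to all cuts of the family. -/
lemma laminar_exists_d : ∀ (N : ℕ) (L : Finset (Finset V)) (_ : L.card ≤ N)
    (s t : E → V) (F : Finset E) (_ : F.Nonempty) (g : E → ℝ)
    (_ : ∀ e ∈ F, ∀ m : ℤ, g e ≠ (m:ℝ))
    (_ : ∀ U ∈ L, ∀ W ∈ L, U ⊆ W ∨ W ⊆ U ∨ U ∩ W = ∅)
    (_ : ∀ U ∈ L, ∃ m : ℤ, ∑ e ∈ F, cc s t U e * g e = (m:ℝ)),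
    ∃ d : E → ℝ, (∀ e ∉ F, d e = 0) ∧ (∃ e, d e ≠ 0) ∧
      ∀ U ∈ L, ∑ e ∈ F, cc s t U e * d e = 0 := by
  intro N
  induction N with
  | zero =>
    intro L hL s t F hF g hg hlam hint
    obtain ⟨e0, he0⟩ := hF
    have hLe : L = ∅ := Finset.card_eq_zero.mp (Nat.le_zero.mp hL)
    refine ⟨fun e => if e = e0 then 1 else 0, fun e he => ?_, ⟨e0, by simp⟩, fun U hU => ?_⟩
    · simp only [ite_eq_right_iff, one_ne_zero]
      rintro rfl; exact absurd he0 he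
    · rw [hLe] at hU; simp at hU
  | succ N ih =>
    intro L hL s t F hF g hg hlam hint
    rcases Finset.eq_empty_or_nonempty L with hLe | hLne
    · obtain ⟨e0, he0⟩ := hF
      refine ⟨fun e => if e = e0 then 1 else 0, fun e he => ?_, ⟨e0, by simp⟩, fun U hU => ?_⟩
      · simp only [ite_eq_right_iff, one_ne_zero]
        rintro rfl; exact absurd he0 he
      · rw [hLe] at hU; simp at hU
    classical
    obtain ⟨U0, hU0L, hU0min'⟩ := Finset.exists_minimal hLne
    have hU0min : ∀ W ∈ L, ¬ W ⊂ U0 := fun W hW h =>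
      h.ne (Finset.Subset.antisymm h.subset (hU0min' hW h.subset))
    -- crossing edges of U0
    set A : Finset E := F.filter (fun e => ¬ ((s e ∈ U0) ↔ (t e ∈ U0))) with hA
    have hAF : A ⊆ F := Finset.filter_subset _ _
    have hccU0_zero : ∀ e ∈ F, e ∉ A → cc s t U0 e = 0 := by
      intro e heF heA
      have : (s e ∈ U0) ↔ (t e ∈ U0) := by
        by_contra hc
        exact heA (Finset.mem_filter.mpr ⟨heF, hc⟩)
      by_cases h1 : s e ∈ U0
      · simp [cc, h1, this.mp h1]
      · have h2 : t e ∉ U0 := fun h => h1 (this.mpr h)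
        simp [cc, h1, h2]
    -- the two relevant auxiliary functions
    set σ : E → ℝ := fun e => if s e ∈ U0 then 1 else -1 with hσ
    set w : E → V := fun e => if s e ∈ U0 then t e else s e with hw
    have hσsq : ∀ e, σ e * σ e = 1 := by
      intro e; simp only [hσ]; split <;> norm_num
    have hccA : ∀ e ∈ A, cc s t U0 e = σ e := by
      intro e heA
      obtain ⟨-, hcross⟩ := Finset.mem_filter.mp heA
      by_cases h1 : s e ∈ U0
      · have h2 : t e ∉ U0 := fun h => hcross ⟨fun _ => h, fun _ => h1⟩
        simp [cc, σ, h1, h2]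
      · have h2 : t e ∈ U0 := by
          by_contra h2
          exact hcross ⟨fun h => absurd h h1, fun h => absurd h h2⟩
        simp [cc, σ, h1, h2]
    have hwA : ∀ e ∈ A, w e ∉ U0 := by
      intro e heA
      obtain ⟨-, hcross⟩ := Finset.mem_filter.mp heA
      by_cases h1 : s e ∈ U0
      · simp only [hw]; rw [if_pos h1]
        exact fun h => hcross ⟨fun _ => h, fun _ => h1⟩
      · simp only [hw]; rw [if_neg h1]; exact h1
    -- L.erase U0: each member contains U0 or is disjoint from it
    have hρ : ∀ W ∈ L.erase U0, U0 ⊆ W ∨ U0 ∩ W = ∅ := by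
      intro W hW
      obtain ⟨hWne, hWL⟩ := Finset.mem_erase.mp hW
      rcases hlam U0 hU0L W hWL with h | h | h
      · exact Or.inl h
      · exact absurd (Finset.ssubset_iff_subset_ne.mpr ⟨h, hWne⟩) (hU0min W hWL)
      · exact Or.inr h
    -- the coefficient identity on A for members of L.erase U0
    have hcWA : ∀ W : Finset V, (U0 ⊆ W ∨ U0 ∩ W = ∅) → ∀ e ∈ A,
        cc s t W e = σ e * ((if U0 ⊆ W then (1:ℝ) else 0) - (if w e ∈ W then 1 else 0)) := by
      intro W hcase e heA
      obtain ⟨-, hcross⟩ := Finset.mem_filter.mp heA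
      by_cases h1 : s e ∈ U0
      · have h2 : t e ∉ U0 := fun h => hcross ⟨fun _ => h, fun _ => h1⟩
        have hwe : w e = t e := by simp only [hw]; rw [if_pos h1]
        rcases hcase with hc | hc
        · have hsW : s e ∈ W := hc h1
          have hU0W : U0 ⊆ W := hc
          simp [cc, σ, h1, hwe, hsW, hU0W]
        · have hsW : s e ∉ W := by
            intro h
            have : s e ∈ U0 ∩ W := Finset.mem_inter.mpr ⟨h1, h⟩
            rw [hc] at this; simp at this
          have hU0W : ¬ U0 ⊆ W := by
            intro h; exact hsW (h h1)
          simp [cc, σ, h1, hwe, hsW, hU0W]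
      · have h2 : t e ∈ U0 := by
          by_contra h2
          exact hcross ⟨fun h => absurd h h1, fun h => absurd h h2⟩
        have hwe : w e = s e := by simp only [hw]; rw [if_neg h1]
        rcases hcase with hc | hc
        · have htW : t e ∈ W := hc h2
          have hU0W : U0 ⊆ W := hc
          simp only [cc, σ, hwe, if_pos htW, if_neg h1, if_pos hU0W]
          split <;> ring
        · have htW : t e ∉ W := by
            intro h
            have : t e ∈ U0 ∩ W := Finset.mem_inter.mpr ⟨h2, h⟩
            rw [hc] at this; simp at this
          have hU0W : ¬ U0 ⊆ W := by
            intro h; exact htW (h h2)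
          simp only [cc, σ, hwe, if_neg htW, if_neg h1, if_neg hU0W]
          split <;> ring
    -- the U0-row is supported on A
    have hrowU0 : ∀ h : E → ℝ, ∑ e ∈ F, cc s t U0 e * h e = ∑ e ∈ A, σ e * h e := by
      intro h
      rw [← Finset.sum_sdiff hAF]
      have h1 : ∑ e ∈ F \ A, cc s t U0 e * h e = 0 := by
        apply Finset.sum_eq_zero
        intro e he
        obtain ⟨heF, heA⟩ := Finset.mem_sdiff.mp he
        rw [hccU0_zero e heF heA, zero_mul]
      rw [h1, zero_add]
      exact Finset.sum_congr rfl fun e he => by rw [hccA e he]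
    -- case on the size of A
    rcases Nat.lt_or_ge A.card 2 with hA2 | hA2
    · rcases Nat.lt_or_ge A.card 1 with hA1 | hA1
      · -- A = ∅
        have hAe : A = ∅ := Finset.card_eq_zero.mp (by omega)
        obtain ⟨d, hd0, hdne, hdorth⟩ := ih (L.erase U0)
          (by
            have := Finset.card_erase_of_mem hU0L
            omega)
          s t F hF g hg
          (fun U hU W hW => hlam U (Finset.mem_of_mem_erase hU) W (Finset.mem_of_mem_erase hW))
          (fun U hU => hint U (Finset.mem_of_mem_erase hU))
        refine ⟨d, hd0, hdne, fun U hU => ?_⟩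
        rcases eq_or_ne U U0 with rfl | hne
        · rw [hrowU0]; rw [hAe]; simp
        · exact hdorth U (Finset.mem_erase.mpr ⟨hne, hU⟩)
      · -- |A| = 1 : contradiction with non-integrality
        have hAc : A.card = 1 := by omega
        obtain ⟨e1, hAe⟩ := Finset.card_eq_one.mp hAc
        obtain ⟨m0, hm0⟩ := hint U0 hU0L
        rw [hrowU0 g, hAe, Finset.sum_singleton] at hm0
        have he1A : e1 ∈ A := by rw [hAe]; exact Finset.mem_singleton_self e1
        have he1F : e1 ∈ F := hAF he1A
        exfalso
        by_cases h1 : s e1 ∈ U0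
        · rw [show σ e1 = 1 by simp [σ, h1], one_mul] at hm0
          exact hg e1 he1F m0 hm0
        · rw [show σ e1 = -1 by simp [σ, h1]] at hm0
          exact hg e1 he1F (-m0) (by push_cast; linarith)
    · -- |A| ≥ 2
      obtain ⟨e1, he1A, b, hbA, hbne⟩ := Finset.one_lt_card.mp (show 1 < A.card by omega)
      have he1F : e1 ∈ F := hAF he1A
      set A' : Finset E := A.erase e1 with hA'
      have hbA' : b ∈ A' := Finset.mem_erase.mpr ⟨Ne.symm hbne, hbA⟩
      set F' : Finset E := F.erase e1 with hF'
      have hA'F' : A' ⊆ F' := Finset.erase_subset_erase e1 hAF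
      have hA'A : A' ⊆ A := Finset.erase_subset e1 A
      have hFA : F \ A = F' \ A' := by
        ext e
        simp only [Finset.mem_sdiff, hF', hA', Finset.mem_erase]
        constructor
        · rintro ⟨heF, heA⟩
          exact ⟨⟨fun hc => heA (hc ▸ he1A), heF⟩, fun hc => heA hc.2⟩
        · rintro ⟨⟨hne, heF⟩, heA⟩
          exact ⟨heF, fun hc => heA ⟨hne, hc⟩⟩
      set s' : E → V := fun e => if e ∈ A' then w e1 else s e with hs'
      set t' : E → V := fun e => if e ∈ A' then w e else t e with ht'
      -- the master computation
      have key : ∀ W : Finset V, (U0 ⊆ W ∨ U0 ∩ W = ∅) → ∀ h : E → ℝ,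
          ∑ e ∈ F', cc s' t' W e * (if e ∈ A then σ e * h e else h e)
            = ∑ e ∈ F, cc s t W e * h e
              - ((if U0 ⊆ W then (1:ℝ) else 0) - (if w e1 ∈ W then 1 else 0))
                  * ∑ e ∈ A, σ e * h e := by
        intro W hcase h
        have hF'split : ∑ e ∈ F', cc s' t' W e * (if e ∈ A then σ e * h e else h e)
            = ∑ e ∈ F' \ A', cc s' t' W e * (if e ∈ A then σ e * h e else h e)
              + ∑ e ∈ A', cc s' t' W e * (if e ∈ A then σ e * h e else h e) :=
          (Finset.sum_sdiff hA'F').symm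
        have hFsplit : ∑ e ∈ F, cc s t W e * h e
            = ∑ e ∈ F \ A, cc s t W e * h e + ∑ e ∈ A, cc s t W e * h e :=
          (Finset.sum_sdiff hAF).symm
        have hpiece1 : ∑ e ∈ F' \ A', cc s' t' W e * (if e ∈ A then σ e * h e else h e)
            = ∑ e ∈ F \ A, cc s t W e * h e := by
          rw [hFA]
          refine Finset.sum_congr rfl fun e he => ?_
          obtain ⟨heF', heA'⟩ := Finset.mem_sdiff.mp he
          have heA : e ∉ A := by
            rw [← hFA] at he
            exact (Finset.mem_sdiff.mp he).2
          rw [if_neg heA]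
          congr 1
          simp only [cc, hs', ht', if_neg heA']
        have hpiece2 : ∑ e ∈ A', cc s' t' W e * (if e ∈ A then σ e * h e else h e)
            = ∑ e ∈ A', ((if w e1 ∈ W then (1:ℝ) else 0) - (if w e ∈ W then 1 else 0))
                * (σ e * h e) := by
          refine Finset.sum_congr rfl fun e he => ?_
          rw [if_pos (hA'A he)]
          congr 1
          simp only [cc, hs', ht', if_pos he]
        have hpiece3 : ∑ e ∈ A, cc s t W e * h e
            = ∑ e ∈ A, (σ e * ((if U0 ⊆ W then (1:ℝ) else 0) - (if w e ∈ W then 1 else 0)))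
                * h e := by
          refine Finset.sum_congr rfl fun e he => ?_
          rw [hcWA W hcase e he]
        -- combine
        rw [hF'split, hpiece1, hpiece2, hFsplit, hpiece3]
        have hsumA : ∑ e ∈ A, (σ e * ((if U0 ⊆ W then (1:ℝ) else 0) - (if w e ∈ W then 1 else 0)))
                * h e
            - ((if U0 ⊆ W then (1:ℝ) else 0) - (if w e1 ∈ W then 1 else 0)) * ∑ e ∈ A, σ e * h e
            = ∑ e ∈ A, ((if w e1 ∈ W then (1:ℝ) else 0) - (if w e ∈ W then 1 else 0))
                * (σ e * h e) := by
          rw [Finset.mul_sum, ← Finset.sum_sub_distrib]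
          refine Finset.sum_congr rfl fun e he => ?_
          ring
        have hsumA' : ∑ e ∈ A, ((if w e1 ∈ W then (1:ℝ) else 0) - (if w e ∈ W then 1 else 0))
                * (σ e * h e)
            = ∑ e ∈ A', ((if w e1 ∈ W then (1:ℝ) else 0) - (if w e ∈ W then 1 else 0))
                * (σ e * h e) := by
          rw [← Finset.add_sum_erase A _ he1A]
          simp [hA']
        linarith [hsumA, hsumA']
      -- new data for the induction
      set g' : E → ℝ := fun e => if e ∈ A then σ e * g e else g e with hg'def
      obtain ⟨m0, hm0⟩ := hint U0 hU0L
      rw [hrowU0 g] at hm0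
      have hg' : ∀ e ∈ F', ∀ m : ℤ, g' e ≠ (m:ℝ) := by
        intro e heF' m
        have heF : e ∈ F := Finset.mem_of_mem_erase heF'
        simp only [hg'def]
        by_cases heA : e ∈ A
        · rw [if_pos heA]
          simp only [hσ]
          split
          · rw [one_mul]; exact hg e heF m
          · intro hc
            exact hg e heF (-m) (by push_cast; linarith)
        · rw [if_neg heA]; exact hg e heF m
      have hint' : ∀ U ∈ L.erase U0, ∃ m : ℤ, ∑ e ∈ F', cc s' t' U e * g' e = (m:ℝ) := by
        intro W hW
        obtain ⟨mW, hmW⟩ := hint W (Finset.mem_of_mem_erase hW)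
        have hc := hρ W hW
        have := key W hc g
        rw [hmW, hm0] at this
        refine ⟨mW - ((if U0 ⊆ W then 1 else 0) - (if w e1 ∈ W then 1 else 0)) * m0, ?_⟩
        rw [show ∑ e ∈ F', cc s' t' W e * g' e
            = ∑ e ∈ F', cc s' t' W e * (if e ∈ A then σ e * g e else g e) from rfl]
        rw [this]
        push_cast
        split <;> split <;> push_cast <;> ring
      obtain ⟨d', hd'0, hd'ne, hd'orth⟩ := ih (L.erase U0)
        (by
          have := Finset.card_erase_of_mem hU0L
          omega)
        s' t' F' ⟨b, hA'F' hbA'⟩ g' hg'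
        (fun U hU W hW => hlam U (Finset.mem_of_mem_erase hU) W (Finset.mem_of_mem_erase hW))
        hint'
      -- lift d' to d
      set d : E → ℝ := fun e =>
        if e = e1 then - σ e1 * (∑ e' ∈ A', d' e') else if e ∈ A then σ e * d' e else d' e
        with hd_def
      have hd_e1 : d e1 = - σ e1 * (∑ e' ∈ A', d' e') := by simp [hd_def]
      have hd_A' : ∀ e ∈ A', d e = σ e * d' e := by
        intro e he
        obtain ⟨hne, heA⟩ := Finset.mem_erase.mp he
        simp [hd_def, hne, heA]
      have hd_off : ∀ e, e ≠ e1 → e ∉ A → d e = d' e := by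
        intro e hne heA
        simp [hd_def, hne, heA]
      -- the "if e ∈ A then σ e * d e else d e" equals d' on F'
      have hHd : ∀ e ∈ F', (if e ∈ A then σ e * d e else d e) = d' e := by
        intro e heF'
        have hne : e ≠ e1 := (Finset.mem_erase.mp heF').1
        by_cases heA : e ∈ A
        · rw [if_pos heA, hd_A' e (Finset.mem_erase.mpr ⟨hne, heA⟩), ← mul_assoc, hσsq, one_mul]
        · rw [if_neg heA, hd_off e hne heA]
      have hsumAd : ∑ e ∈ A, σ e * d e = 0 := by
        rw [← Finset.add_sum_erase A _ he1A, ← hA']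
        have h1 : ∑ e ∈ A', σ e * d e = ∑ e ∈ A', d' e := by
          refine Finset.sum_congr rfl fun e he => ?_
          rw [hd_A' e he, ← mul_assoc, hσsq, one_mul]
        rw [h1, hd_e1]
        linear_combination (-(∑ e' ∈ A', d' e')) * hσsq e1
      refine ⟨d, ?_, ?_, ?_⟩
      · intro e heF
        have hne : e ≠ e1 := fun hc => heF (hc ▸ he1F)
        have heA : e ∉ A := fun hc => heF (hAF hc)
        rw [hd_off e hne heA]
        exact hd'0 e (fun hc => heF (Finset.mem_of_mem_erase hc))
      · obtain ⟨e, he⟩ := hd'ne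
        have heF' : e ∈ F' := by
          by_contra hc
          exact he (hd'0 e hc)
        have hne : e ≠ e1 := (Finset.mem_erase.mp heF').1
        by_cases heA : e ∈ A
        · refine ⟨e, ?_⟩
          rw [hd_A' e (Finset.mem_erase.mpr ⟨hne, heA⟩)]
          simp only [hσ]
          split <;> simpa using he
        · exact ⟨e, by rw [hd_off e hne heA]; exact he⟩
      · intro U hU
        rcases eq_or_ne U U0 with rfl | hne
        · rw [hrowU0 d]; exact hsumAd
        · have hUe : U ∈ L.erase U0 := Finset.mem_erase.mpr ⟨hne, hU⟩
          have hc := hρ U hUe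
          have hk := key U hc d
          have hLHS : ∑ e ∈ F', cc s' t' U e * (if e ∈ A then σ e * d e else d e)
              = ∑ e ∈ F', cc s' t' U e * d' e := by
            refine Finset.sum_congr rfl fun e he => ?_
            rw [hHd e he]
          rw [hLHS, hd'orth U hUe, hsumAd, mul_zero, sub_zero] at hk
          exact hk.symm

/-- The polytope `P₁^τ(G)` of fractional nowhere-zero `τ`-strongly-connected orientations is
integral: every extreme point has integer coordinates. -/
theorem nz_tau_sco_polytope_integral (s t : E → V) (τ : ℕ) (hτ : 1 ≤ τ)
    (x : E × Bool → ℝ)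
    (hx : x ∈ Set.extremePoints ℝ {y : E × Bool → ℝ |
      (∀ e : E, 1 ≤ y (e, true) ∧ 1 ≤ y (e, false) ∧ y (e, true) + y (e, false) = (τ : ℝ)) ∧
      ∀ U : Finset V, U.Nonempty → U ≠ univ →
        (τ : ℝ) ≤ ∑ p ∈ outArcs (bsrc s t) (btgt s t) U, y p}) :
    ∀ p : E × Bool, ∃ n : ℤ, x p = (n : ℝ) := by
  classical
  by_contra hcon
  push_neg at hcon
  obtain ⟨p0, hp0⟩ := hcon
  rw [mem_extremePoints] at hx
  obtain ⟨hxS, hxext⟩ := hx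
  obtain ⟨hfeas, hcuts⟩ := hxS
  set g : E → ℝ := fun e => x (e, true) with hgdef
  -- the set of fractional edges
  set F : Finset E := univ.filter (fun e => ∀ m : ℤ, g e ≠ (m:ℝ)) with hFdef
  have hgF : ∀ e ∈ F, ∀ m : ℤ, g e ≠ (m:ℝ) := by
    intro e he; exact (Finset.mem_filter.mp he).2
  have hnotF : ∀ e ∉ F, ∃ m : ℤ, g e = (m:ℝ) := by
    intro e he
    by_contra hc
    push_neg at hc
    exact he (Finset.mem_filter.mpr ⟨Finset.mem_univ e, hc⟩)
  have hxfalse : ∀ e : E, x (e, false) = (τ:ℝ) - g e := by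
    intro e
    have := (hfeas e).2.2
    simp only [hgdef]
    linarith
  have hFne : F.Nonempty := by
    obtain ⟨e0, b0⟩ := p0
    refine ⟨e0, Finset.mem_filter.mpr ⟨Finset.mem_univ e0, ?_⟩⟩
    cases b0 with
    | true => exact fun m => hp0 m
    | false =>
      intro m hm
      exact hp0 ((τ:ℤ) - m) (by rw [hxfalse e0] at hp0 ⊢; push_cast; linarith)
  -- cut sums
  set cutSum : Finset V → ℝ := fun U => ∑ p ∈ outArcs (bsrc s t) (btgt s t) U, x p
    with hcutdef
  -- decomposition of cut sums
  have hcut_decomp : ∀ U : Finset V,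
      cutSum U = (∑ e : E, cc s t U e * g e)
        + (τ:ℝ) * ∑ e : E, (if t e ∈ U ∧ s e ∉ U then (1:ℝ) else 0) := by
    intro U
    rw [hcutdef]
    simp only
    rw [sum_outArcs, Finset.mul_sum, ← Finset.sum_add_distrib]
    refine Finset.sum_congr rfl fun e _ => ?_
    rw [hxfalse e]
    simp only [cc, hgdef]
    by_cases h1 : s e ∈ U <;> by_cases h2 : t e ∈ U <;> simp [h1, h2] <;> ring
  -- integrality of the fractional part of tight cut sums
  have hcut_int : ∀ U : Finset V, cutSum U = (τ:ℝ) →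
      ∃ z : ℤ, ∑ e ∈ F, cc s t U e * g e = (z:ℝ) := by
    intro U hU
    have h1 : ∃ z1 : ℤ, ∑ e ∈ univ \ F, cc s t U e * g e = (z1:ℝ) := by
      apply int_sum
      intro e he
      obtain ⟨m, hm⟩ := hnotF e (Finset.mem_sdiff.mp he).2
      refine ⟨((if s e ∈ U then (1:ℤ) else 0) - (if t e ∈ U then 1 else 0)) * m, ?_⟩
      rw [hm]
      simp only [cc]
      push_cast
      split <;> split <;> ring
    have h2 : ∃ z2 : ℤ, ∑ e : E, (if t e ∈ U ∧ s e ∉ U then (1:ℝ) else 0) = (z2:ℝ) := by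
      apply int_sum
      intro e _
      by_cases h : t e ∈ U ∧ s e ∉ U
      · exact ⟨1, by simp [h]⟩
      · exact ⟨0, by simp [h]⟩
    obtain ⟨z1, hz1⟩ := h1
    obtain ⟨z2, hz2⟩ := h2
    have hsplit : ∑ e ∈ univ \ F, cc s t U e * g e + ∑ e ∈ F, cc s t U e * g e
        = ∑ e : E, cc s t U e * g e := Finset.sum_sdiff (Finset.subset_univ F)
    have hdec := hcut_decomp U
    rw [hU] at hdec
    refine ⟨(τ:ℤ) - (τ:ℤ) * z2 - z1, ?_⟩
    push_cast
    rw [hz2] at hdec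
    linarith
  -- submodularity of cut sums
  have hxnonneg : ∀ p : E × Bool, 0 ≤ x p := by
    rintro ⟨e, b⟩
    cases b
    · linarith [(hfeas e).2.1]
    · linarith [(hfeas e).1]
  have hsubmod : ∀ U W : Finset V,
      cutSum (U ∩ W) + cutSum (U ∪ W) ≤ cutSum U + cutSum W := by
    intro U W
    have hrw : ∀ Z : Finset V, cutSum Z
        = ∑ p : E × Bool, (if bsrc s t p ∈ Z ∧ btgt s t p ∉ Z then x p else 0) := by
      intro Z
      rw [hcutdef]
      simp only [outArcs]
      rw [Finset.sum_filter]
    rw [hrw, hrw, hrw, hrw, ← Finset.sum_add_distrib, ← Finset.sum_add_distrib]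
    refine Finset.sum_le_sum fun p _ => ?_
    have hnn := hxnonneg p
    by_cases h1 : bsrc s t p ∈ U <;> by_cases h2 : bsrc s t p ∈ W <;>
      by_cases h3 : btgt s t p ∈ U <;> by_cases h4 : btgt s t p ∈ W <;>
      simp [Finset.mem_inter, Finset.mem_union, h1, h2, h3, h4] <;> linarith
  -- the family of tight cuts
  set T : Finset (Finset V) := (univ : Finset (Finset V)).filter
    (fun U => U.Nonempty ∧ U ≠ univ ∧ cutSum U = (τ:ℝ)) with hTdef
  have hTmem : ∀ U : Finset V, U ∈ T ↔ U.Nonempty ∧ U ≠ univ ∧ cutSum U = (τ:ℝ) := by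
    intro U
    simp [hTdef]
  have hclose : ∀ U ∈ T, ∀ W ∈ T, ¬ crossFree U W → (U ∩ W ∈ T ∧ U ∪ W ∈ T) := by
    intro U hU W hW hcf
    obtain ⟨hUne, hUpr, hUt⟩ := (hTmem U).mp hU
    obtain ⟨hWne, hWpr, hWt⟩ := (hTmem W).mp hW
    have hine : (U ∩ W).Nonempty := by
      rw [Finset.nonempty_iff_ne_empty]
      intro h
      exact hcf (Or.inr (Or.inr (Or.inl h)))
    have hipr : U ∩ W ≠ univ := by
      intro h
      exact hUpr (Finset.univ_subset_iff.mp (h ▸ Finset.inter_subset_left))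
    have hune : (U ∪ W).Nonempty := hUne.mono Finset.subset_union_left
    have hupr : U ∪ W ≠ univ := by
      intro h
      exact hcf (Or.inr (Or.inr (Or.inr h)))
    have hi : (τ:ℝ) ≤ cutSum (U ∩ W) := hcuts (U ∩ W) hine hipr
    have hu : (τ:ℝ) ≤ cutSum (U ∪ W) := hcuts (U ∪ W) hune hupr
    have hs := hsubmod U W
    rw [hUt, hWt] at hs
    constructor
    · exact (hTmem _).mpr ⟨hine, hipr, by linarith⟩
    · exact (hTmem _).mpr ⟨hune, hupr, by linarith⟩
  -- maximal cross-free subfamily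
  set P : Finset (Finset (Finset V)) := (univ : Finset (Finset (Finset V))).filter
    (fun L => L ⊆ T ∧ ∀ U ∈ L, ∀ W ∈ L, crossFree U W) with hPdef
  have hPne : P.Nonempty := by
    refine ⟨∅, Finset.mem_filter.mpr ⟨Finset.mem_univ _, Finset.empty_subset _, ?_⟩⟩
    intro U hU; simp at hU
  obtain ⟨L, hLP, hLmax⟩ := Finset.exists_max_image P Finset.card hPne
  obtain ⟨-, hLsub, hLcf⟩ := Finset.mem_filter.mp hLP
  -- convert to a laminar family by complementation
  obtain ⟨e0, he0⟩ := id hFne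
  set r : V := s e0 with hrdef
  set flip : Finset V → Finset V := fun U => if r ∈ U then univ \ U else U with hflipdef
  have hflip_nr : ∀ U : Finset V, r ∉ flip U := by
    intro U
    simp only [hflipdef]
    split
    · simp; assumption
    · assumption
  have hflip_cf : ∀ U W : Finset V, crossFree U W → crossFree (flip U) (flip W) := by
    intro U W h
    simp only [hflipdef]
    split <;> split
    · exact crossFree_compl_left.mpr (crossFree_compl_right.mpr h)
    · exact crossFree_compl_left.mpr h
    · exact crossFree_compl_right.mpr h
    · exact h
  set Lhat : Finset (Finset V) := L.image flip with hLhatdef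
  have hLhat_lam : ∀ X ∈ Lhat, ∀ Y ∈ Lhat, X ⊆ Y ∨ Y ⊆ X ∨ X ∩ Y = ∅ := by
    intro X hX Y hY
    obtain ⟨U, hUL, rfl⟩ := Finset.mem_image.mp hX
    obtain ⟨W, hWL, rfl⟩ := Finset.mem_image.mp hY
    have h := hflip_cf U W (hLcf U hUL W hWL)
    rcases h with h | h | h | h
    · exact Or.inl h
    · exact Or.inr (Or.inl h)
    · exact Or.inr (Or.inr h)
    · exfalso
      have : r ∈ flip U ∪ flip W := by rw [h]; simp
      rcases Finset.mem_union.mp this with h' | h'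
      · exact hflip_nr U h'
      · exact hflip_nr W h'
  have hLhat_int : ∀ X ∈ Lhat, ∃ m : ℤ, ∑ e ∈ F, cc s t X e * g e = (m:ℝ) := by
    intro X hX
    obtain ⟨U, hUL, rfl⟩ := Finset.mem_image.mp hX
    obtain ⟨-, -, hUt⟩ := (hTmem U).mp (hLsub hUL)
    obtain ⟨z, hz⟩ := hcut_int U hUt
    simp only [hflipdef]
    split
    · refine ⟨-z, ?_⟩
      have : ∑ e ∈ F, cc s t (univ \ U) e * g e = - ∑ e ∈ F, cc s t U e * g e := by
        rw [← Finset.sum_neg_distrib]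
        refine Finset.sum_congr rfl fun e _ => ?_
        rw [cc_compl]; ring
      rw [this, hz]; push_cast; ring
    · exact ⟨z, hz⟩
  -- apply the laminar lemma
  obtain ⟨d, hd0, hdne, hdorthhat⟩ := laminar_exists_d Lhat.card Lhat le_rfl s t F hFne g hgF
    hLhat_lam hLhat_int
  -- transfer orthogonality to L
  have hdorthL : ∀ U ∈ L, ∑ e ∈ F, cc s t U e * d e = 0 := by
    intro U hUL
    have hXhat : flip U ∈ Lhat := Finset.mem_image_of_mem flip hUL
    have h := hdorthhat (flip U) hXhat
    simp only [hflipdef] at h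
    by_cases hr : r ∈ U
    · rw [if_pos hr] at h
      have : ∑ e ∈ F, cc s t (univ \ U) e * d e = - ∑ e ∈ F, cc s t U e * d e := by
        rw [← Finset.sum_neg_distrib]
        refine Finset.sum_congr rfl fun e _ => ?_
        rw [cc_compl]; ring
      rw [this] at h
      linarith
    · rwa [if_neg hr] at h
  -- D vanishes on all tight cuts
  set D : Finset V → ℝ := fun U => ∑ e ∈ F, cc s t U e * d e with hDdef
  have hmod : ∀ U W : Finset V, D (U ∩ W) + D (U ∪ W) = D U + D W := by
    intro U W
    simp only [hDdef]
    rw [← Finset.sum_add_distrib, ← Finset.sum_add_distrib]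
    refine Finset.sum_congr rfl fun e _ => ?_
    linear_combination d e * cc_inter_union s t U W e
  have hLmax' : ∀ L' : Finset (Finset V), L' ⊆ T → (∀ U ∈ L', ∀ W ∈ L', crossFree U W) →
      L'.card ≤ L.card := by
    intro L' h1 h2
    exact hLmax L' (Finset.mem_filter.mpr ⟨Finset.mem_univ _, h1, h2⟩)
  have hDT : ∀ U ∈ T, D U = 0 := D_vanishes T L D hmod hclose hLsub hLcf hLmax' hdorthL
  -- full-support version of D
  have hDfull : ∀ U : Finset V, ∑ e : E, cc s t U e * d e = D U := by
    intro U
    simp only [hDdef]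
    symm
    apply Finset.sum_subset (Finset.subset_univ F)
    intro e _ he
    rw [hd0 e he, mul_zero]
  -- the perturbation
  have hgt : ∀ e ∈ F, 1 < x (e, true) ∧ 1 < x (e, false) := by
    intro e he
    constructor
    · rcases lt_or_eq_of_le (hfeas e).1 with h | h
      · exact h
      · exact absurd h.symm (by have := hgF e he 1; simpa using this)
    · rcases lt_or_eq_of_le (hfeas e).2.1 with h | h
      · exact h
      · exfalso
        have h2 : g e = ((τ:ℤ) - 1 : ℤ) := by
          rw [hxfalse e] at h; push_cast; linarith
        exact hgF e he _ h2
  obtain ⟨ε1, hε1, hε1le, hε1prop⟩ := exists_pos_eps (univ : Finset E)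
    (fun e => if d e = 0 then 1 else min (x (e, true) - 1) (x (e, false) - 1)) d
    (by
      intro e _
      by_cases h : d e = 0
      · simp [h]
      · have heF : e ∈ F := by
          by_contra hc
          exact h (hd0 e hc)
        obtain ⟨ha, hb⟩ := hgt e heF
        simp only [if_neg h]
        exact lt_min (by linarith) (by linarith))
  set N : Finset (Finset V) := (univ : Finset (Finset V)).filter
    (fun U => U.Nonempty ∧ U ≠ univ ∧ cutSum U ≠ (τ:ℝ)) with hNdef
  obtain ⟨ε2, hε2, hε2le, hε2prop⟩ := exists_pos_eps N (fun U => cutSum U - (τ:ℝ)) D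
    (by
      intro U hU
      obtain ⟨-, hUne, hUpr, hUnt⟩ := Finset.mem_filter.mp hU
      have hge : (τ:ℝ) ≤ cutSum U := hcuts U hUne hUpr
      exact sub_pos.mpr (lt_of_le_of_ne hge (Ne.symm hUnt)))
  set ε : ℝ := min ε1 ε2 with hεdef
  have hεpos : 0 < ε := lt_min hε1 hε2
  set d2 : E × Bool → ℝ := fun p => if p.2 then d p.1 else - d p.1 with hd2def
  have hd2sum : ∀ U : Finset V, ∑ p ∈ outArcs (bsrc s t) (btgt s t) U, d2 p = D U := by
    intro U
    have h := sum_outArcs_antisym s t U d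
    simp only [hd2def]
    rw [h, hDfull]
  have hd2t : ∀ e : E, d2 (e, true) = d e := fun e => rfl
  have hd2f : ∀ e : E, d2 (e, false) = - d e := fun e => rfl
  have hmember : ∀ η : ℝ, |η| ≤ ε → ((fun p => x p + η * d2 p) ∈ {y : E × Bool → ℝ |
      (∀ e : E, 1 ≤ y (e, true) ∧ 1 ≤ y (e, false) ∧ y (e, true) + y (e, false) = (τ : ℝ)) ∧
      ∀ U : Finset V, U.Nonempty → U ≠ univ →
        (τ : ℝ) ≤ ∑ p ∈ outArcs (bsrc s t) (btgt s t) U, y p}) := by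
    intro η hη
    have hηabs : ∀ c : ℝ, |η * c| ≤ ε * |c| := by
      intro c
      rw [abs_mul]
      exact mul_le_mul_of_nonneg_right hη (abs_nonneg c)
    constructor
    · intro e
      simp only [hd2t, hd2f]
      by_cases h : d e = 0
      · simp only [h, mul_zero, add_zero, neg_zero]
        exact ⟨(hfeas e).1, (hfeas e).2.1, (hfeas e).2.2⟩
      · have heF : e ∈ F := by
          by_contra hc
          exact h (hd0 e hc)
        have hb := hε1prop e (Finset.mem_univ e)
        rw [if_neg h] at hb
        have hbound : ε * |d e| ≤ min (x (e, true) - 1) (x (e, false) - 1) := by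
          calc ε * |d e| ≤ ε1 * |d e| :=
                mul_le_mul_of_nonneg_right (min_le_left ε1 ε2) (abs_nonneg _)
            _ ≤ _ := hb
        have h1 : |η * d e| ≤ x (e, true) - 1 :=
          le_trans (le_trans (hηabs (d e)) hbound) (min_le_left _ _)
        have h2 : |η * d e| ≤ x (e, false) - 1 :=
          le_trans (le_trans (hηabs (d e)) hbound) (min_le_right _ _)
        have h3 := neg_abs_le (η * d e)
        have h4 := le_abs_self (η * d e)
        refine ⟨by linarith, ?_, ?_⟩
        · have : η * - d e = - (η * d e) := by ring
          rw [this]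
          linarith
        · have := (hfeas e).2.2
          nlinarith [this]
    · intro U hUne hUpr
      have hsum : ∑ p ∈ outArcs (bsrc s t) (btgt s t) U, (x p + η * d2 p)
          = cutSum U + η * D U := by
        rw [Finset.sum_add_distrib, ← Finset.mul_sum, hd2sum U]
      rw [hsum]
      by_cases ht : cutSum U = (τ:ℝ)
      · have hDU : D U = 0 := hDT U ((hTmem U).mpr ⟨hUne, hUpr, ht⟩)
        rw [ht, hDU, mul_zero, add_zero]
      · have hUN : U ∈ N := Finset.mem_filter.mpr ⟨Finset.mem_univ _, hUne, hUpr, ht⟩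
        have hb := hε2prop U hUN
        have hbound : ε * |D U| ≤ cutSum U - (τ:ℝ) := by
          calc ε * |D U| ≤ ε2 * |D U| :=
                mul_le_mul_of_nonneg_right (min_le_right ε1 ε2) (abs_nonneg _)
            _ ≤ _ := hb
        have h1 := le_trans (hηabs (D U)) hbound
        have h3 := neg_abs_le (η * D U)
        linarith
  have hyminus := hmember (-ε) (by rw [abs_neg, abs_of_pos hεpos])
  have hyplus := hmember ε (by rw [abs_of_pos hεpos])
  have hseg : x ∈ openSegment ℝ (fun p => x p + (-ε) * d2 p) (fun p => x p + ε * d2 p) := by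
    refine ⟨1/2, 1/2, by norm_num, by norm_num, by norm_num, ?_⟩
    funext p
    simp only [Pi.add_apply, Pi.smul_apply, smul_eq_mul]
    ring
  obtain ⟨-, h2⟩ := hxext _ hyminus _ hyplus hseg
  obtain ⟨e, he⟩ := hdne
  have := congrFun h2 (e, true)
  simp only [hd2t] at this
  have : ε * d e = 0 := by linarith [this]
  rcases mul_eq_zero.mp this with h | h
  · exact absurd h (ne_of_gt hεpos)
  · exact he h
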